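/- Let p be an odd prime, let G̃ be a group, let f : DihedralGroup p →* G̃ be an injective homomorphism with image G := f.range, let a : ZMod p, and let x : G̃ satisfy x^2 = f (DihedralGroup.sr a) and G̃ = ⟨G, x⟩ (i.e., ⊤ = f.range ⊔ Subgroup.zpowers x). Then either f.range is a normal subgroup of G̃, or the intersection of f.range with its conjugate x⁻¹ (f.range) x equals the cyclic subgroup Subgroup.zpowers (f (DihedralGroup.sr a)) generated by the reflection. -/

import Mathlib

open DihedralGroup Subgroup

lemma aux_subgroup (p : ℕ) (hp : p.Prime) (hodd : Odd p) (a : ZMod p)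
    (K : Subgroup (DihedralGroup p)) (hK : sr a ∈ K) :
    K = zpowers (sr a) ∨ K = ⊤ := by
  haveI : NeZero p := ⟨hp.ne_zero⟩
  have hcard : Nat.card K ∣ 2 * p := by
    simpa [Nat.card_eq_fintype_card, DihedralGroup.card] using Subgroup.card_subgroup_dvd_card K
  have h2 : orderOf (⟨sr a, hK⟩ : K) = 2 := by
    rw [← orderOf_coe]; exact orderOf_sr a
  have h2d : 2 ∣ Nat.card K := h2 ▸ orderOf_dvd_natCard _
  obtain ⟨e, he⟩ := h2d
  have hep : e ∣ p := by
    have := he ▸ hcard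
    exact (mul_dvd_mul_iff_left (by norm_num : (2:ℕ) ≠ 0)).mp this
  rcases (Nat.Prime.eq_one_or_self_of_dvd hp e hep) with h1 | h1
  · left
    have hle : zpowers (sr a) ≤ K := zpowers_le.mpr hK
    refine (Subgroup.eq_of_le_of_card_ge hle ?_).symm
    rw [Nat.card_zpowers, orderOf_sr, he, h1]
  · right
    apply Subgroup.eq_top_of_card_eq
    rw [he, h1, Nat.card_eq_fintype_card, DihedralGroup.card]

/-- Lemma 2: if `D_p = G ⊆ ⟨G, x⟩ = G'` and `x² = g` is a reflection, then either
`G ⭴ G'` or `G ∩ Gˣ = ⟨g⟩`. -/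
theorem normal_or_intersection_cyclic (p : ℕ) (hp : p.Prime) (hodd : Odd p)
    (G' : Type) [Group G'] (f : DihedralGroup p →* G') (hf : Function.Injective f)
    (a : ZMod p) (x : G') (hx : x ^ 2 = f (DihedralGroup.sr a))
    (hgen : (⊤ : Subgroup G') = f.range ⊔ Subgroup.zpowers x) :
    f.range.Normal ∨
      f.range ⊓ Subgroup.map (MulAut.conj x⁻¹).toMonoidHom f.range =
        Subgroup.zpowers (f (DihedralGroup.sr a)) := by
  set φ := (MulAut.conj x⁻¹).toMonoidHom with hφ
  set H : Subgroup G' := f.range ⊓ Subgroup.map φ f.range with hH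
  have hx4 : x ^ 4 = 1 := by
    have h2 : (sr a) ^ 2 = 1 := by
      rw [← orderOf_sr a]; exact pow_orderOf_eq_one _
    calc x ^ 4 = (x ^ 2) ^ 2 := by rw [← pow_mul]
    _ = f ((sr a) ^ 2) := by rw [hx, map_pow]
    _ = 1 := by rw [h2, map_one]
  have hmem : f (sr a) ∈ H := by
    constructor
    · exact ⟨sr a, rfl⟩
    · refine ⟨f (sr a), ⟨sr a, rfl⟩, ?_⟩
      show x⁻¹ * f (sr a) * (x⁻¹)⁻¹ = f (sr a)
      rw [← hx]; group
  have hK : sr a ∈ H.comap f := hmem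
  have hmapcomap : Subgroup.map f (H.comap f) = f.range ⊓ H := Subgroup.map_comap_eq f H
  rcases aux_subgroup p hp hodd a (H.comap f) hK with hc | hc
  · right
    have hHle : H ≤ f.range := inf_le_left
    have : Subgroup.map f (H.comap f) = H := by
      rw [hmapcomap, inf_eq_right.mpr hHle]
    rw [← this, hc]
    exact MonoidHom.map_zpowers f (sr a)
  · left
    have hrle : f.range ≤ H := by
      have h1 : Subgroup.map f (⊤ : Subgroup (DihedralGroup p)) = f.range ⊓ H := by
        rw [← hc]; exact hmapcomap
      rw [← MonoidHom.range_eq_map] at h1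
      rw [h1]; exact inf_le_right
    have hA : ∀ h ∈ f.range, x * h * x⁻¹ ∈ f.range := by
      intro h hh
      have hmem2 : h ∈ Subgroup.map φ f.range := (inf_le_right : H ≤ _) (hrle hh)
      obtain ⟨k, hk, hφk⟩ := hmem2
      have hk' : x⁻¹ * k * (x⁻¹)⁻¹ = h := hφk
      have he : x * h * x⁻¹ = k := by rw [← hk']; group
      rw [he]; exact hk
    have hxn : x ∈ Subgroup.normalizer (f.range : Set G') := by
      rw [Subgroup.mem_normalizer_iff]
      intro h
      constructor
      · exact hA h
      · intro hh
        have h1 := hA _ (hA _ (hA _ hh))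
        have e : x*(x*(x*(x*h*x⁻¹)*x⁻¹)*x⁻¹)*x⁻¹ = h := by
          have e2 : x*(x*(x*(x*h*x⁻¹)*x⁻¹)*x⁻¹)*x⁻¹ = x^4 * h * (x^4)⁻¹ := by
            group
            rw [show x*x*x*x = x^4 by rw [pow_succ, pow_succ, pow_succ, pow_one]]
            try rfl
            try group
          rw [e2, hx4]; group
        rwa [e] at h1
    have htle : (⊤ : Subgroup G') ≤ Subgroup.normalizer (f.range : Set G') := by
      rw [hgen]
      exact sup_le Subgroup.le_normalizer (Subgroup.zpowers_le.mpr hxn)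
    exact Subgroup.normalizer_eq_top_iff.mp (top_le_iff.mp htle)
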